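/- arXiv:1201.3088 — 5 statements merged into one kernel-verified Lean document; each statement's English description precedes it below -/
import Mathlib

section
/- Let z′ ∈ ℂ and let (a₁, b₁), (a₂, b₂) ∈ ℂ × ℂ satisfy b₁ ≠ 0, b₂ ≠ 0, a₁ + z′·b₁ = 0 and a₂ + z′·b₂ = 0 (so that both pairwise distance functions vanish at the singular fade state z′). If |b₁| ≤ |b₂|, then for every z ∈ ℂ, |a₁ + z·b₁| ≤ |a₂ + z·b₂|; moreover if |b₁| < |b₂| then the inequality is strict for every z ≠ z′. In particular, among all class distance functions that vanish at a given singular fade state, the one with minimal coefficient |s₂ − s₂′| is the minimum of that collection at every fade state other than the singular one. -/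
/-- **Lemma 4 (ordering lemma).** Among the pairwise distance functions `z ↦ |a + z·b|`
that vanish at a common singular fade state `z′`, the one with the smaller coefficient
`|b|` is everywhere the smaller one, strictly so away from `z′` when `|b₁| < |b₂|`. -/
theorem ordering_of_class_distance_functions
    (z' a₁ b₁ a₂ b₂ : ℂ) (hb₁ : b₁ ≠ 0) (hb₂ : b₂ ≠ 0)
    (h₁ : a₁ + z' * b₁ = 0) (h₂ : a₂ + z' * b₂ = 0)
    (hle : ‖b₁‖ ≤ ‖b₂‖) :
    (∀ z : ℂ, ‖a₁ + z * b₁‖ ≤ ‖a₂ + z * b₂‖) ∧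
    (‖b₁‖ < ‖b₂‖ →
      ∀ z : ℂ, z ≠ z' → ‖a₁ + z * b₁‖ < ‖a₂ + z * b₂‖) := by
  have e₁ : a₁ = -z' * b₁ := by linear_combination h₁
  have e₂ : a₂ = -z' * b₂ := by linear_combination h₂
  have key : ∀ z : ℂ, ∀ a b : ℂ, a = -z' * b →
      ‖a + z * b‖ = ‖z - z'‖ * ‖b‖ := by
    intro z a b hab
    rw [hab, show -z' * b + z * b = (z - z') * b by ring, norm_mul]
  constructor
  · intro z
    rw [key z a₁ b₁ e₁, key z a₂ b₂ e₂]
    exact mul_le_mul_of_nonneg_left hle (norm_nonneg _)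
  · intro hlt z hz
    rw [key z a₁ b₁ e₁, key z a₂ b₂ e₂]
    have : ‖z - z'‖ > 0 := by
      simpa using sub_ne_zero.mpr hz
    exact mul_lt_mul_of_pos_left hlt this
end

section
/- Let S₄ = {1, i, −1, −i} ⊆ ℂ be the QPSK signal set and H₄ its set of nonzero singular fade states, H₄ = {−(s₁ − s₁′)/(s₂ − s₂′) : s₁ ≠ s₁′, s₂ ≠ s₂′ in S₄}. Then the singular fade states in the wedge [0, π/4] are exactly two: {z ∈ H₄ : |z| ≥ 1 and arg z ∈ [0, π/4]} = {1, √2·e^{iπ/4}}, where arg denotes the principal argument. -/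
open Complex in
private lemma qpsk_aux_val :
    (Real.sqrt 2 : ℂ) * Complex.exp ((↑(Real.pi / 4)) * Complex.I) = 1 + Complex.I := by
  rw [Complex.exp_mul_I, ← Complex.ofReal_cos, ← Complex.ofReal_sin,
    Real.cos_pi_div_four, Real.sin_pi_div_four]
  have h2 : Real.sqrt 2 * (Real.sqrt 2 / 2) = 1 := by
    nlinarith [Real.mul_self_sqrt (show (0:ℝ) ≤ 2 by norm_num)]
  apply Complex.ext <;> simp [h2]

private lemma qpsk_aux_re_pos (z : ℂ) (h1 : 1 ≤ ‖z‖)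
    (h0 : 0 ≤ z.arg) (h4 : z.arg ≤ Real.pi / 4) : 0 < z.re := by
  have hπ := Real.pi_pos
  have hc : 0 < Real.cos z.arg := by
    apply Real.cos_pos_of_mem_Ioo
    constructor <;> [linarith; linarith]
  have := Complex.norm_mul_cos_arg z
  nlinarith

set_option maxHeartbeats 4000000 in
/-- **Lemma 3 for QPSK.** For the QPSK signal set, the nonzero singular fade states lying
in the wedge `[0, π/4]` (modulus at least `1`, principal argument in `[0, π/4]`) are
exactly `1` and `√2·e^{iπ/4}`. -/
theorem qpsk_singular_fade_states_in_wedge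
    (S H : Set ℂ)
    (hS : S = {1, Complex.I, -1, -Complex.I})
    (hH : H = {z : ℂ | ∃ s₁ ∈ S, ∃ s₁' ∈ S, ∃ s₂ ∈ S, ∃ s₂' ∈ S,
        s₁ ≠ s₁' ∧ s₂ ≠ s₂' ∧ z = -(s₁ - s₁') / (s₂ - s₂')}) :
    {z ∈ H | 1 ≤ ‖z‖ ∧ z.arg ∈ Set.Icc 0 (Real.pi / 4)} =
      {1, (Real.sqrt 2 : ℂ) * Complex.exp ((↑(Real.pi / 4)) * Complex.I)} := by
  subst hS hH
  have hπ := Real.pi_pos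
  ext z
  simp only [Set.mem_setOf_eq, Set.mem_insert_iff, Set.mem_singleton_iff, Set.mem_Icc]
  constructor
  · rintro ⟨⟨s₁, hs₁, s₁', hs₁', s₂, hs₂, s₂', hs₂', h1, h2, rfl⟩, habs, h0, h4⟩
    rw [qpsk_aux_val]
    have him : (0:ℝ) ≤ (-(s₁ - s₁') / (s₂ - s₂')).im := Complex.arg_nonneg_iff.mp h0
    have hre : (0:ℝ) < (-(s₁ - s₁') / (s₂ - s₂')).re := qpsk_aux_re_pos _ habs h0 h4
    have hnsq : (1:ℝ) ≤ (-(s₁ - s₁') / (s₂ - s₂')).re ^ 2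
        + (-(s₁ - s₁') / (s₂ - s₂')).im ^ 2 := by
      have hs := Complex.sq_norm (-(s₁ - s₁') / (s₂ - s₂'))
      have hnn := norm_nonneg (-(s₁ - s₁') / (s₂ - s₂'))
      rw [Complex.normSq_apply] at hs
      nlinarith
    rcases hs₁ with rfl | rfl | rfl | rfl <;>
      rcases hs₁' with rfl | rfl | rfl | rfl <;>
      rcases hs₂ with rfl | rfl | rfl | rfl <;>
      rcases hs₂' with rfl | rfl | rfl | rfl <;>
      first
        | exact absurd rfl h1
        | exact absurd rfl h2
        | (norm_num [Complex.ext_iff, Complex.div_re, Complex.div_im,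
            Complex.normSq_apply] at him; done)
        | (norm_num [Complex.ext_iff, Complex.div_re, Complex.div_im,
            Complex.normSq_apply] at hre; done)
        | (norm_num [Complex.ext_iff, Complex.div_re, Complex.div_im,
            Complex.normSq_apply] at hnsq; done)
        | norm_num [Complex.ext_iff, Complex.div_re, Complex.div_im,
            Complex.normSq_apply] at him hre hnsq ⊢
  · rintro (rfl | rfl)
    · refine ⟨⟨1, by simp, -1, by simp, -1, by simp, 1, by simp, by norm_num,
        by norm_num, by norm_num⟩, by simp, by simp [Complex.arg_one]; positivity⟩
    · refine ⟨⟨1, by simp, -1, by simp, -1, by simp, -Complex.I, by simp, by norm_num,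
        ?_, ?_⟩, ?_, ?_⟩
      · intro h
        rw [Complex.ext_iff] at h
        norm_num at h
      · rw [qpsk_aux_val]
        rw [eq_div_iff (by intro h; rw [Complex.ext_iff] at h; norm_num at h : (-1 - -Complex.I) ≠ 0)]
        rw [Complex.ext_iff]; norm_num
      · rw [norm_mul, Complex.norm_exp_ofReal_mul_I, mul_one, Complex.norm_real, Real.norm_eq_abs,
          abs_of_nonneg (Real.sqrt_nonneg 2)]
        exact Real.one_le_sqrt.mpr (by norm_num)
      · rw [Complex.exp_mul_I, Complex.arg_real_mul _ (by positivity : (0:ℝ) < Real.sqrt 2),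
          Complex.arg_cos_add_sin_mul_I (by constructor <;> linarith)]
        exact ⟨by linarith, by linarith⟩
end

section
/- Let S₈ = {e^{2πik/8} : k = 0, …, 7} ⊆ ℂ be the 8-PSK signal set and H₈ = {−(s₁ − s₁′)/(s₂ − s₂′) : s₁ ≠ s₁′, s₂ ≠ s₂′ in S₈} its set of nonzero singular fade states. Then the singular fade states in the wedge [0, π/8] are exactly seven: {z ∈ H₈ : |z| ≥ 1 and arg z ∈ [0, π/8]} = {1, √2, 1+√2, √(4−2√2)·e^{iπ/8}, √(1+1/√2)·e^{iπ/8}, √(2+√2)·e^{iπ/8}, √(4+2√2)·e^{iπ/8}}, where arg denotes the principal argument. -/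
open Real Complex

noncomputable def pskC : ℂ := Complex.exp ((Real.pi / 8 : ℝ) * Complex.I)

lemma pskC_pow (n : ℕ) : pskC ^ n = Complex.exp ((Real.pi * n / 8 : ℝ) * Complex.I) := by
  rw [pskC, ← Complex.exp_nat_mul]
  congr 1
  push_cast
  ring

lemma pskC_abs (n : ℕ) : ‖pskC ^ n‖ = 1 := by
  rw [pskC_pow]; exact Complex.norm_exp_ofReal_mul_I _

lemma pskC_ne_zero : pskC ≠ 0 := Complex.exp_ne_zero _

lemma pskC_pow_16 : pskC ^ 16 = 1 := by
  rw [pskC_pow]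
  have h : (Real.pi * (16:ℕ) / 8 : ℝ) = 2 * Real.pi := by push_cast; ring
  rw [h]
  push_cast
  rw [show ((2:ℂ) * (Real.pi:ℂ)) * Complex.I = 2 * Real.pi * Complex.I by ring]
  exact Complex.exp_two_pi_mul_I

lemma pskC_pow_8 : pskC ^ 8 = -1 := by
  rw [pskC_pow]
  have h : (Real.pi * (8:ℕ) / 8 : ℝ) = Real.pi := by push_cast; ring
  rw [h, Complex.exp_mul_I]
  simp

lemma diff_exp (x y : ℝ) :
    Complex.exp ((x:ℂ) * Complex.I) - Complex.exp ((y:ℂ) * Complex.I)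
      = 2 * (Real.sin ((x - y)/2) : ℝ) * Complex.I *
        Complex.exp ((((x + y)/2 : ℝ) : ℂ) * Complex.I) := by
  have hx : (x:ℂ) * Complex.I = ((x-y)/2 : ℝ) * Complex.I + ((x+y)/2 : ℝ) * Complex.I := by
    push_cast; ring
  have hy : (y:ℂ) * Complex.I = (-((x-y)/2) : ℝ) * Complex.I + ((x+y)/2 : ℝ) * Complex.I := by
    push_cast; ring
  rw [hx, hy, Complex.exp_add, Complex.exp_add]
  simp only [Complex.exp_mul_I, ← Complex.ofReal_sin, ← Complex.ofReal_cos,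
    Real.sin_neg, Real.cos_neg]
  push_cast
  ring

noncomputable def pskV : ℕ → ℝ
  | 1 => 2 - Real.sqrt 2
  | 2 => 2
  | 3 => 2 + Real.sqrt 2
  | _ => 4

noncomputable def pskF (j : ℕ) : ℝ := Real.sqrt (pskV j) / 2

lemma s2sq : Real.sqrt 2 ^ 2 = 2 := Real.sq_sqrt (by norm_num)
lemma s2pos : 0 < Real.sqrt 2 := Real.sqrt_pos.2 (by norm_num)
lemma s2lt2 : Real.sqrt 2 < 2 := by nlinarith [s2sq, s2pos]
lemma s2gt1 : 1 < Real.sqrt 2 := by nlinarith [s2sq, s2pos]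

lemma pskV_pos (j : ℕ) : 0 < pskV j := by
  match j with
  | 1 => simp only [pskV]; linarith [s2lt2]
  | 2 => norm_num [pskV]
  | 3 => simp only [pskV]; linarith [s2pos]
  | 0 => norm_num [pskV]
  | (n+4) => show (0:ℝ) < 4; norm_num

lemma pskF_pos (j : ℕ) : 0 < pskF j :=
  div_pos (Real.sqrt_pos.2 (pskV_pos j)) (by norm_num)

lemma pskV_mono : pskV 1 < pskV 2 ∧ pskV 2 < pskV 3 ∧ pskV 3 < pskV 4 := by
  simp only [pskV]
  refine ⟨by linarith [s2pos], by linarith [s2pos], by linarith [s2lt2]⟩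

lemma pskF_strict {j k : ℕ} (h1 : 1 ≤ j) (h2 : j < k) (h3 : k ≤ 4) : pskF j < pskF k := by
  have h := pskV_mono
  have mono : pskV j < pskV k := by
    have hj4 : j ≤ 4 := by omega
    interval_cases j <;> interval_cases k <;>
      first
        | exact h.1
        | exact h.2.1
        | exact h.2.2
        | linarith [h.1, h.2.1, h.2.2]
  have hs := Real.sqrt_lt_sqrt (pskV_pos j).le mono
  unfold pskF
  linarith

lemma sv1 : Real.sin (Real.pi * 1 / 8) = pskF 1 := by
  rw [show Real.pi * 1 / 8 = Real.pi / 8 by ring, Real.sin_pi_div_eight]; rfl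

lemma sv2 : Real.sin (Real.pi * 2 / 8) = pskF 2 := by
  rw [show Real.pi * 2 / 8 = Real.pi / 4 by ring, Real.sin_pi_div_four]; rfl

lemma sv3 : Real.sin (Real.pi * 3 / 8) = pskF 3 := by
  rw [show Real.pi * 3 / 8 = Real.pi / 2 - Real.pi / 8 by ring, Real.sin_pi_div_two_sub,
    Real.cos_pi_div_eight]; rfl

lemma sv4 : Real.sin (Real.pi * 4 / 8) = pskF 4 := by
  rw [show Real.pi * 4 / 8 = Real.pi / 2 by ring, Real.sin_pi_div_two]
  show (1:ℝ) = Real.sqrt 4 / 2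
  rw [show (4:ℝ) = 2^2 by norm_num, Real.sqrt_sq (by norm_num)]; norm_num

lemma sv5 : Real.sin (Real.pi * 5 / 8) = pskF 3 := by
  rw [show Real.pi * 5 / 8 = Real.pi - Real.pi * 3 / 8 by ring, Real.sin_pi_sub, sv3]

lemma sv6 : Real.sin (Real.pi * 6 / 8) = pskF 2 := by
  rw [show Real.pi * 6 / 8 = Real.pi - Real.pi * 2 / 8 by ring, Real.sin_pi_sub, sv2]

lemma sv7 : Real.sin (Real.pi * 7 / 8) = pskF 1 := by
  rw [show Real.pi * 7 / 8 = Real.pi - Real.pi * 1 / 8 by ring, Real.sin_pi_sub, sv1]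

lemma diff_eq_sin (n n' : ℕ) :
    Complex.exp (2 * (Real.pi : ℂ) * Complex.I * (n : ℂ) / 8)
      - Complex.exp (2 * (Real.pi : ℂ) * Complex.I * (n' : ℂ) / 8)
      = 2 * (Real.sin (Real.pi * (((n:ℝ) - (n':ℝ)))/8) : ℝ) * Complex.I * pskC ^ (n + n') := by
  have ha : 2 * (Real.pi : ℂ) * Complex.I * (n : ℂ) / 8
      = ((Real.pi * n / 4 : ℝ) : ℂ) * Complex.I := by push_cast; ring
  have ha' : 2 * (Real.pi : ℂ) * Complex.I * (n' : ℂ) / 8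
      = ((Real.pi * n' / 4 : ℝ) : ℂ) * Complex.I := by push_cast; ring
  rw [ha, ha', diff_exp, pskC_pow]
  have e1 : (Real.pi * n / 4 - Real.pi * n' / 4) / 2 = Real.pi * ((n:ℝ) - (n':ℝ)) / 8 := by ring
  have e2 : ((Real.pi * n / 4 + Real.pi * n' / 4) / 2 : ℝ) = Real.pi * (((n + n' : ℕ)):ℝ) / 8 := by
    push_cast; ring
  rw [e1, e2]

lemma num_decomp (a a' : Fin 8) (h : a ≠ a') :
    ∃ j p : ℕ, 1 ≤ j ∧ j ≤ 4 ∧ p % 2 = j % 2 ∧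
      Complex.exp (2 * (Real.pi : ℂ) * Complex.I * ((a : ℕ) : ℂ) / 8)
        - Complex.exp (2 * (Real.pi : ℂ) * Complex.I * ((a' : ℕ) : ℂ) / 8)
        = 2 * (pskF j : ℝ) * Complex.I * pskC ^ p := by
  rw [diff_eq_sin]
  obtain ⟨d, hd, hd1, hd2, hd0⟩ :
      ∃ d : ℤ, ((a:ℕ):ℤ) - ((a':ℕ):ℤ) = d ∧ -7 ≤ d ∧ d ≤ 7 ∧ d ≠ 0 := by
    refine ⟨_, rfl, ?_, ?_, ?_⟩
    · have := a.isLt; have := a'.isLt; omega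
    · have := a.isLt; have := a'.isLt; omega
    · have : (a:ℕ) ≠ (a':ℕ) := fun hc => h (Fin.val_injective hc)
      omega
  have hcast : ((a:ℕ):ℝ) - ((a':ℕ):ℝ) = ((d:ℤ):ℝ) := by
    exact_mod_cast congrArg (fun t : ℤ => (t : ℝ)) hd
  rw [hcast]
  interval_cases d
  · refine ⟨1, (a:ℕ)+(a':ℕ)+8, by norm_num, by norm_num, by omega, ?_⟩
    rw [pow_add pskC ((a:ℕ)+(a':ℕ)) 8, pskC_pow_8]
    have hs : Real.sin (Real.pi * (((-7:ℤ)):ℝ) / 8) = -pskF 1 := by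
      push_cast
      rw [show Real.pi * (-7) / 8 = -(Real.pi * 7 / 8) by ring, Real.sin_neg, sv7]
    rw [hs]
    push_cast
    ring
  · refine ⟨2, (a:ℕ)+(a':ℕ)+8, by norm_num, by norm_num, by omega, ?_⟩
    rw [pow_add pskC ((a:ℕ)+(a':ℕ)) 8, pskC_pow_8]
    have hs : Real.sin (Real.pi * (((-6:ℤ)):ℝ) / 8) = -pskF 2 := by
      push_cast
      rw [show Real.pi * (-6) / 8 = -(Real.pi * 6 / 8) by ring, Real.sin_neg, sv6]
    rw [hs]
    push_cast
    ring
  · refine ⟨3, (a:ℕ)+(a':ℕ)+8, by norm_num, by norm_num, by omega, ?_⟩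
    rw [pow_add pskC ((a:ℕ)+(a':ℕ)) 8, pskC_pow_8]
    have hs : Real.sin (Real.pi * (((-5:ℤ)):ℝ) / 8) = -pskF 3 := by
      push_cast
      rw [show Real.pi * (-5) / 8 = -(Real.pi * 5 / 8) by ring, Real.sin_neg, sv5]
    rw [hs]
    push_cast
    ring
  · refine ⟨4, (a:ℕ)+(a':ℕ)+8, by norm_num, by norm_num, by omega, ?_⟩
    rw [pow_add pskC ((a:ℕ)+(a':ℕ)) 8, pskC_pow_8]
    have hs : Real.sin (Real.pi * (((-4:ℤ)):ℝ) / 8) = -pskF 4 := by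
      push_cast
      rw [show Real.pi * (-4) / 8 = -(Real.pi * 4 / 8) by ring, Real.sin_neg, sv4]
    rw [hs]
    push_cast
    ring
  · refine ⟨3, (a:ℕ)+(a':ℕ)+8, by norm_num, by norm_num, by omega, ?_⟩
    rw [pow_add pskC ((a:ℕ)+(a':ℕ)) 8, pskC_pow_8]
    have hs : Real.sin (Real.pi * (((-3:ℤ)):ℝ) / 8) = -pskF 3 := by
      push_cast
      rw [show Real.pi * (-3) / 8 = -(Real.pi * 3 / 8) by ring, Real.sin_neg, sv3]
    rw [hs]
    push_cast
    ring
  · refine ⟨2, (a:ℕ)+(a':ℕ)+8, by norm_num, by norm_num, by omega, ?_⟩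
    rw [pow_add pskC ((a:ℕ)+(a':ℕ)) 8, pskC_pow_8]
    have hs : Real.sin (Real.pi * (((-2:ℤ)):ℝ) / 8) = -pskF 2 := by
      push_cast
      rw [show Real.pi * (-2) / 8 = -(Real.pi * 2 / 8) by ring, Real.sin_neg, sv2]
    rw [hs]
    push_cast
    ring
  · refine ⟨1, (a:ℕ)+(a':ℕ)+8, by norm_num, by norm_num, by omega, ?_⟩
    rw [pow_add pskC ((a:ℕ)+(a':ℕ)) 8, pskC_pow_8]
    have hs : Real.sin (Real.pi * (((-1:ℤ)):ℝ) / 8) = -pskF 1 := by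
      push_cast
      rw [show Real.pi * (-1) / 8 = -(Real.pi * 1 / 8) by ring, Real.sin_neg, sv1]
    rw [hs]
    push_cast
    ring
  · exact absurd rfl hd0
  · refine ⟨1, (a:ℕ)+(a':ℕ), by norm_num, by norm_num, by omega, ?_⟩
    have hs : Real.sin (Real.pi * (((1:ℤ)):ℝ) / 8) = pskF 1 := by
      push_cast; exact sv1
    rw [hs]
  · refine ⟨2, (a:ℕ)+(a':ℕ), by norm_num, by norm_num, by omega, ?_⟩
    have hs : Real.sin (Real.pi * (((2:ℤ)):ℝ) / 8) = pskF 2 := by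
      push_cast; exact sv2
    rw [hs]
  · refine ⟨3, (a:ℕ)+(a':ℕ), by norm_num, by norm_num, by omega, ?_⟩
    have hs : Real.sin (Real.pi * (((3:ℤ)):ℝ) / 8) = pskF 3 := by
      push_cast; exact sv3
    rw [hs]
  · refine ⟨4, (a:ℕ)+(a':ℕ), by norm_num, by norm_num, by omega, ?_⟩
    have hs : Real.sin (Real.pi * (((4:ℤ)):ℝ) / 8) = pskF 4 := by
      push_cast; exact sv4
    rw [hs]
  · refine ⟨3, (a:ℕ)+(a':ℕ), by norm_num, by norm_num, by omega, ?_⟩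
    have hs : Real.sin (Real.pi * (((5:ℤ)):ℝ) / 8) = pskF 3 := by
      push_cast; exact sv5
    rw [hs]
  · refine ⟨2, (a:ℕ)+(a':ℕ), by norm_num, by norm_num, by omega, ?_⟩
    have hs : Real.sin (Real.pi * (((6:ℤ)):ℝ) / 8) = pskF 2 := by
      push_cast; exact sv6
    rw [hs]
  · refine ⟨1, (a:ℕ)+(a':ℕ), by norm_num, by norm_num, by omega, ?_⟩
    have hs : Real.sin (Real.pi * (((7:ℤ)):ℝ) / 8) = pskF 1 := by
      push_cast; exact sv7
    rw [hs]

lemma pskC_zpow_16 : pskC ^ (16:ℤ) = 1 := by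
  rw [show (16:ℤ) = ((16:ℕ):ℤ) by norm_num, zpow_natCast, pskC_pow_16]

lemma pskC_zpow_mod (M : ℤ) : pskC ^ M = pskC ^ ((M % 16).toNat) := by
  conv_lhs => rw [← Int.emod_add_mul_ediv M 16]
  rw [zpow_add₀ pskC_ne_zero, zpow_mul, pskC_zpow_16, one_zpow, mul_one]
  rw [← zpow_natCast pskC ((M % 16).toNat), Int.toNat_of_nonneg (Int.emod_nonneg M (by norm_num))]

lemma abs_r_pskC (r : ℝ) (m : ℕ) : ‖(r:ℂ) * pskC ^ m‖ = |r| := by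
  rw [norm_mul, pskC_abs, Complex.norm_real, Real.norm_eq_abs, mul_one]

lemma arg_r_pskC (r : ℝ) (hr : 0 < r) (m : ℕ) (hm : m ≤ 8) :
    ((r:ℂ) * pskC ^ m).arg = Real.pi * m / 8 := by
  rw [pskC_pow, Complex.arg_real_mul _ hr, Complex.exp_mul_I]
  apply Complex.arg_cos_add_sin_mul_I
  constructor
  · have : (0:ℝ) ≤ Real.pi * m / 8 := by positivity
    linarith [Real.pi_pos]
  · rw [div_le_iff₀ (by norm_num)]
    have : (m:ℝ) ≤ 8 := by exact_mod_cast hm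
    nlinarith [Real.pi_pos]

lemma arg_r_pskC_neg (r : ℝ) (hr : 0 < r) (m : ℕ) (hm9 : 9 ≤ m) (hm : m ≤ 15) :
    ((r:ℂ) * pskC ^ m).arg = Real.pi * m / 8 - 2 * Real.pi := by
  have key : pskC ^ m = Complex.exp (((Real.pi * m / 8 - 2 * Real.pi : ℝ) : ℂ) * Complex.I) := by
    rw [pskC_pow]
    have : ((Real.pi * m / 8 - 2 * Real.pi : ℝ) : ℂ) * Complex.I
        = ((Real.pi * m / 8 : ℝ) : ℂ) * Complex.I - 2 * Real.pi * Complex.I := by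
      push_cast; ring
    rw [this, Complex.exp_sub, Complex.exp_two_pi_mul_I, div_one]
  rw [key, Complex.arg_real_mul _ hr, Complex.exp_mul_I]
  apply Complex.arg_cos_add_sin_mul_I
  have hm' : (9:ℝ) ≤ (m:ℝ) := by exact_mod_cast hm9
  have hm'' : (m:ℝ) ≤ 15 := by exact_mod_cast hm
  constructor
  · nlinarith [Real.pi_pos]
  · nlinarith [Real.pi_pos]

lemma combine (j k p q : ℕ) :
    -(2 * ((pskF j : ℝ) : ℂ) * Complex.I * pskC ^ p)
        / (2 * ((pskF k : ℝ) : ℂ) * Complex.I * pskC ^ q)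
      = ((pskF j / pskF k : ℝ) : ℂ) * pskC ^ ((((p:ℤ) + 8 - (q:ℤ)) % 16).toNat) := by
  rw [← pskC_zpow_mod, zpow_sub₀ pskC_ne_zero, zpow_add₀ pskC_ne_zero,
    zpow_natCast, zpow_natCast, show (8:ℤ) = ((8:ℕ):ℤ) by norm_num, zpow_natCast, pskC_pow_8]
  have hk : ((pskF k : ℝ) : ℂ) ≠ 0 := Complex.ofReal_ne_zero.2 (pskF_pos k).ne'
  have hq : pskC ^ q ≠ 0 := pow_ne_zero _ pskC_ne_zero
  push_cast
  field_simp

lemma forward_form (z : ℂ) (a a' b b' : Fin 8) (h1 : a ≠ a') (h2 : b ≠ b')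
    (hz : z = -(Complex.exp (2 * (Real.pi : ℂ) * Complex.I * ((a : ℕ) : ℂ) / 8)
          - Complex.exp (2 * (Real.pi : ℂ) * Complex.I * ((a' : ℕ) : ℂ) / 8))
        / (Complex.exp (2 * (Real.pi : ℂ) * Complex.I * ((b : ℕ) : ℂ) / 8)
          - Complex.exp (2 * (Real.pi : ℂ) * Complex.I * ((b' : ℕ) : ℂ) / 8))) :
    ∃ j k m : ℕ, 1 ≤ j ∧ j ≤ 4 ∧ 1 ≤ k ∧ k ≤ 4 ∧ m < 16 ∧ (m + j + k) % 2 = 0 ∧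
      z = ((pskF j / pskF k : ℝ) : ℂ) * pskC ^ m := by
  obtain ⟨j, p, hj1, hj4, hp, hn⟩ := num_decomp a a' h1
  obtain ⟨k, q, hk1, hk4, hqq, hd⟩ := num_decomp b b' h2
  refine ⟨j, k, (((p:ℤ) + 8 - (q:ℤ)) % 16).toNat, hj1, hj4, hk1, hk4, ?_, ?_, ?_⟩
  · omega
  · omega
  · rw [hz, hn, hd, combine]

lemma fdiv {j k : ℕ} {R : ℝ} (hR : 0 ≤ R) (h : R ^ 2 * pskV k = pskV j) :
    pskF j / pskF k = R := by
  have hk := pskV_pos k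
  have hsq : Real.sqrt (pskV j) = R * Real.sqrt (pskV k) := by
    rw [← h, show R ^ 2 * pskV k = (R * Real.sqrt (pskV k)) ^ 2 by
      rw [mul_pow, Real.sq_sqrt hk.le]]
    exact Real.sqrt_sq (by positivity)
  have hks : Real.sqrt (pskV k) ≠ 0 := (Real.sqrt_pos.2 hk).ne'
  unfold pskF
  rw [hsq]
  field_simp

lemma ratJJ (j : ℕ) : pskF j / pskF j = 1 := div_self (pskF_pos j).ne'

lemma rat42 : pskF 4 / pskF 2 = Real.sqrt 2 := by
  apply fdiv (Real.sqrt_nonneg _)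
  rw [s2sq]; simp [pskV]; norm_num

lemma rat31 : pskF 3 / pskF 1 = 1 + Real.sqrt 2 := by
  apply fdiv (by positivity)
  simp only [pskV]
  linear_combination (-Real.sqrt 2) * s2sq

lemma rat21 : pskF 2 / pskF 1 = Real.sqrt (2 + Real.sqrt 2) := by
  apply fdiv (Real.sqrt_nonneg _)
  rw [Real.sq_sqrt (by positivity)]
  simp only [pskV]
  linear_combination (-1 : ℝ) * s2sq

lemma rat41 : pskF 4 / pskF 1 = Real.sqrt (4 + 2 * Real.sqrt 2) := by
  apply fdiv (Real.sqrt_nonneg _)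
  rw [Real.sq_sqrt (by positivity)]
  simp only [pskV]
  linear_combination (-2 : ℝ) * s2sq

lemma rat32 : pskF 3 / pskF 2 = Real.sqrt (1 + 1 / Real.sqrt 2) := by
  apply fdiv (Real.sqrt_nonneg _)
  rw [Real.sq_sqrt (by positivity)]
  simp only [pskV]
  have hs := s2pos.ne'
  field_simp
  linear_combination (-1 : ℝ) * s2sq

lemma rat43 : pskF 4 / pskF 3 = Real.sqrt (4 - 2 * Real.sqrt 2) := by
  apply fdiv (Real.sqrt_nonneg _)
  rw [Real.sq_sqrt (by nlinarith [s2lt2, s2pos])]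
  simp only [pskV]
  linear_combination (-2 : ℝ) * s2sq

lemma one_le_sqrt' {A : ℝ} (h : 1 ≤ A) : 1 ≤ Real.sqrt A := by
  nlinarith [Real.sq_sqrt (le_trans zero_le_one h), Real.sqrt_nonneg A]

lemma ratio_val (a a' b b' j k : ℕ)
    (hsa : Real.sin (Real.pi * ((a:ℝ) - (a':ℝ)) / 8) = pskF j)
    (hsb : Real.sin (Real.pi * ((b:ℝ) - (b':ℝ)) / 8) = pskF k) :
    -(Complex.exp (2 * (Real.pi:ℂ) * Complex.I * (a:ℂ) / 8)
        - Complex.exp (2 * (Real.pi:ℂ) * Complex.I * (a':ℂ) / 8))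
      / (Complex.exp (2 * (Real.pi:ℂ) * Complex.I * (b:ℂ) / 8)
        - Complex.exp (2 * (Real.pi:ℂ) * Complex.I * (b':ℂ) / 8))
      = ((pskF j / pskF k : ℝ) : ℂ)
          * pskC ^ ((((((a+a'):ℕ)):ℤ) + 8 - ((((b+b'):ℕ)):ℤ)) % 16).toNat := by
  rw [diff_eq_sin a a', diff_eq_sin b b', hsa, hsb, combine]

lemma E_ne (a a' : Fin 8) (h : a ≠ a') :
    Complex.exp (2 * (Real.pi:ℂ) * Complex.I * ((a:ℕ):ℂ) / 8)
      ≠ Complex.exp (2 * (Real.pi:ℂ) * Complex.I * ((a':ℕ):ℂ) / 8) := by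
  intro hc
  obtain ⟨j, p, _, _, _, hn⟩ := num_decomp a a' h
  rw [hc, sub_self] at hn
  have hne : (2 * ((pskF j : ℝ):ℂ) * Complex.I * pskC ^ p) ≠ 0 := by
    apply mul_ne_zero (mul_ne_zero (mul_ne_zero (by norm_num)
      (Complex.ofReal_ne_zero.2 (pskF_pos j).ne')) Complex.I_ne_zero)
      (pow_ne_zero _ pskC_ne_zero)
  exact hne hn.symm

lemma abs_r_pskC1 (r : ℝ) : ‖(r:ℂ) * pskC‖ = |r| := by
  have := abs_r_pskC r 1
  rwa [pow_one] at this

lemma arg_r_pskC1 (r : ℝ) (hr : 0 < r) : ((r:ℂ) * pskC).arg = Real.pi / 8 := by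
  have := arg_r_pskC r hr 1 (by norm_num)
  rw [pow_one] at this
  rw [this]; ring

lemma revmem (S H : Set ℂ)
    (hS : S = Set.range (fun k : Fin 8 =>
      Complex.exp (2 * Real.pi * Complex.I * ((k : ℕ) : ℂ) / 8)))
    (hH : H = {z : ℂ | ∃ s₁ ∈ S, ∃ s₁' ∈ S, ∃ s₂ ∈ S, ∃ s₂' ∈ S,
        s₁ ≠ s₁' ∧ s₂ ≠ s₂' ∧ z = -(s₁ - s₁') / (s₂ - s₂')})
    (a a' b b' : Fin 8) (h1 : a ≠ a') (h2 : b ≠ b') (T : ℂ)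
    (hT : T = -(Complex.exp (2 * (Real.pi:ℂ) * Complex.I * ((a:ℕ):ℂ) / 8)
        - Complex.exp (2 * (Real.pi:ℂ) * Complex.I * ((a':ℕ):ℂ) / 8))
      / (Complex.exp (2 * (Real.pi:ℂ) * Complex.I * ((b:ℕ):ℂ) / 8)
        - Complex.exp (2 * (Real.pi:ℂ) * Complex.I * ((b':ℕ):ℂ) / 8))) : T ∈ H := by
  subst hH hS
  exact ⟨_, ⟨a, rfl⟩, _, ⟨a', rfl⟩, _, ⟨b, rfl⟩, _, ⟨b', rfl⟩, E_ne a a' h1, E_ne b b' h2, hT⟩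

/-- **Example 3.** For the 8-PSK signal set, the nonzero singular fade states lying in
the wedge `[0, π/8]` (modulus at least `1`, principal argument in `[0, π/8]`) are exactly
the seven points `1`, `√2`, `1+√2`, `√(4−2√2)·e^{iπ/8}`, `√(1+1/√2)·e^{iπ/8}`,
`√(2+√2)·e^{iπ/8}`, `√(4+2√2)·e^{iπ/8}`. -/
theorem psk8_singular_fade_states_in_wedge
    (S H : Set ℂ)
    (hS : S = Set.range (fun k : Fin 8 =>
      Complex.exp (2 * Real.pi * Complex.I * ((k : ℕ) : ℂ) / 8)))
    (hH : H = {z : ℂ | ∃ s₁ ∈ S, ∃ s₁' ∈ S, ∃ s₂ ∈ S, ∃ s₂' ∈ S,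
        s₁ ≠ s₁' ∧ s₂ ≠ s₂' ∧ z = -(s₁ - s₁') / (s₂ - s₂')}) :
    {z ∈ H | 1 ≤ ‖z‖ ∧ z.arg ∈ Set.Icc 0 (Real.pi / 8)} =
      {(1 : ℂ), (Real.sqrt 2 : ℂ), ((1 + Real.sqrt 2 : ℝ) : ℂ),
        (Real.sqrt (4 - 2 * Real.sqrt 2) : ℂ) *
          Complex.exp ((↑(Real.pi / 8)) * Complex.I),
        (Real.sqrt (1 + 1 / Real.sqrt 2) : ℂ) *
          Complex.exp ((↑(Real.pi / 8)) * Complex.I),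
        (Real.sqrt (2 + Real.sqrt 2) : ℂ) *
          Complex.exp ((↑(Real.pi / 8)) * Complex.I),
        (Real.sqrt (4 + 2 * Real.sqrt 2) : ℂ) *
          Complex.exp ((↑(Real.pi / 8)) * Complex.I)} := by
  ext z
  simp only [Set.mem_setOf_eq, Set.mem_insert_iff, Set.mem_singleton_iff, Set.mem_Icc]
  constructor
  · rintro ⟨hzH, habs, harg1, harg2⟩
    rw [hH] at hzH
    simp only [hS, Set.mem_setOf_eq, Set.mem_range] at hzH
    obtain ⟨s₁, ⟨a, rfl⟩, s₁', ⟨a', rfl⟩, s₂, ⟨b, rfl⟩, s₂', ⟨b', rfl⟩, hne1, hne2, hzeq⟩ := hzH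
    have ha : a ≠ a' := fun hc => hne1 (by rw [hc])
    have hb : b ≠ b' := fun hc => hne2 (by rw [hc])
    obtain ⟨j, k, m, hj1, hj4, hk1, hk4, hm16, hpar, hzf⟩ :=
      forward_form z a a' b b' ha hb hzeq
    have hr : 0 < pskF j / pskF k := div_pos (pskF_pos j) (pskF_pos k)
    have habs' : 1 ≤ pskF j / pskF k := by
      rw [hzf, abs_r_pskC, abs_of_pos hr] at habs
      exact habs
    have hm01 : m = 0 ∨ m = 1 := by
      by_contra hc
      push_neg at hc
      have hm2 : 2 ≤ m := by omega
      rcases le_or_gt m 8 with h8 | h8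
      · rw [hzf, arg_r_pskC _ hr m h8] at harg2
        have hm2' : (2:ℝ) ≤ (m:ℝ) := by exact_mod_cast hm2
        nlinarith [Real.pi_pos]
      · rw [hzf, arg_r_pskC_neg _ hr m (by omega) (by omega)] at harg1
        have hm15 : (m:ℝ) ≤ 15 := by exact_mod_cast (by omega : m ≤ 15)
        nlinarith [Real.pi_pos]
    rw [hzf]
    interval_cases j <;> interval_cases k
    · have hm0 : m = 0 := by omega
      subst hm0
      rw [pow_zero, mul_one, ratJJ]
      norm_num
    · exfalso
      have hlt : pskF 1 < pskF 2 := pskF_strict (by norm_num) (by norm_num) (by norm_num)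
      have hd1 : pskF 1 / pskF 2 < 1 := (div_lt_one (pskF_pos 2)).2 hlt
      linarith
    · exfalso
      have hlt : pskF 1 < pskF 3 := pskF_strict (by norm_num) (by norm_num) (by norm_num)
      have hd1 : pskF 1 / pskF 3 < 1 := (div_lt_one (pskF_pos 3)).2 hlt
      linarith
    · exfalso
      have hlt : pskF 1 < pskF 4 := pskF_strict (by norm_num) (by norm_num) (by norm_num)
      have hd1 : pskF 1 / pskF 4 < 1 := (div_lt_one (pskF_pos 4)).2 hlt
      linarith
    · have hm1 : m = 1 := by omega
      subst hm1
      rw [pow_one, rat21]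
      exact Or.inr (Or.inr (Or.inr (Or.inr (Or.inr (Or.inl rfl)))))
    · have hm0 : m = 0 := by omega
      subst hm0
      rw [pow_zero, mul_one, ratJJ]
      norm_num
    · exfalso
      have hlt : pskF 2 < pskF 3 := pskF_strict (by norm_num) (by norm_num) (by norm_num)
      have hd1 : pskF 2 / pskF 3 < 1 := (div_lt_one (pskF_pos 3)).2 hlt
      linarith
    · exfalso
      have hlt : pskF 2 < pskF 4 := pskF_strict (by norm_num) (by norm_num) (by norm_num)
      have hd1 : pskF 2 / pskF 4 < 1 := (div_lt_one (pskF_pos 4)).2 hlt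
      linarith
    · have hm0 : m = 0 := by omega
      subst hm0
      rw [pow_zero, mul_one, rat31]
      exact Or.inr (Or.inr (Or.inl rfl))
    · have hm1 : m = 1 := by omega
      subst hm1
      rw [pow_one, rat32]
      exact Or.inr (Or.inr (Or.inr (Or.inr (Or.inl rfl))))
    · have hm0 : m = 0 := by omega
      subst hm0
      rw [pow_zero, mul_one, ratJJ]
      norm_num
    · exfalso
      have hlt : pskF 3 < pskF 4 := pskF_strict (by norm_num) (by norm_num) (by norm_num)
      have hd1 : pskF 3 / pskF 4 < 1 := (div_lt_one (pskF_pos 4)).2 hlt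
      linarith
    · have hm1 : m = 1 := by omega
      subst hm1
      rw [pow_one, rat41]
      exact Or.inr (Or.inr (Or.inr (Or.inr (Or.inr (Or.inr rfl)))))
    · have hm0 : m = 0 := by omega
      subst hm0
      rw [pow_zero, mul_one, rat42]
      exact Or.inr (Or.inl rfl)
    · have hm1 : m = 1 := by omega
      subst hm1
      rw [pow_one, rat43]
      exact Or.inr (Or.inr (Or.inr (Or.inl rfl)))
    · have hm0 : m = 0 := by omega
      subst hm0
      rw [pow_zero, mul_one, ratJJ]
      norm_num
  · rintro (rfl | rfl | rfl | rfl | rfl | rfl | rfl)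
    · refine ⟨?_, ?_, ?_, ?_⟩
      · apply revmem S H hS hH 1 0 5 4 (by decide) (by decide)
        show _ = -(Complex.exp (2 * (Real.pi:ℂ) * Complex.I * ((1:ℕ):ℂ) / 8)
            - Complex.exp (2 * (Real.pi:ℂ) * Complex.I * ((0:ℕ):ℂ) / 8))
          / (Complex.exp (2 * (Real.pi:ℂ) * Complex.I * ((5:ℕ):ℂ) / 8)
            - Complex.exp (2 * (Real.pi:ℂ) * Complex.I * ((4:ℕ):ℂ) / 8))
        rw [ratio_val 1 0 5 4 1 1 (by rw [show Real.pi * (((1:ℕ):ℝ) - ((0:ℕ):ℝ)) / 8 = Real.pi * 1 / 8 by push_cast; ring]; exact sv1) (by rw [show Real.pi * (((5:ℕ):ℝ) - ((4:ℕ):ℝ)) / 8 = Real.pi * 1 / 8 by push_cast; ring]; exact sv1)]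
        norm_num [ratJJ]
      · norm_num
      · rw [Complex.arg_one]
      · rw [Complex.arg_one]; positivity
    · refine ⟨?_, ?_, ?_, ?_⟩
      · apply revmem S H hS hH 4 0 7 5 (by decide) (by decide)
        show _ = -(Complex.exp (2 * (Real.pi:ℂ) * Complex.I * ((4:ℕ):ℂ) / 8)
            - Complex.exp (2 * (Real.pi:ℂ) * Complex.I * ((0:ℕ):ℂ) / 8))
          / (Complex.exp (2 * (Real.pi:ℂ) * Complex.I * ((7:ℕ):ℂ) / 8)
            - Complex.exp (2 * (Real.pi:ℂ) * Complex.I * ((5:ℕ):ℂ) / 8))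
        rw [ratio_val 4 0 7 5 4 2 (by rw [show Real.pi * (((4:ℕ):ℝ) - ((0:ℕ):ℝ)) / 8 = Real.pi * 4 / 8 by push_cast; ring]; exact sv4) (by rw [show Real.pi * (((7:ℕ):ℝ) - ((5:ℕ):ℝ)) / 8 = Real.pi * 2 / 8 by push_cast; ring]; exact sv2)]
        norm_num [rat42]
      · rw [Complex.norm_real, Real.norm_eq_abs, _root_.abs_of_nonneg (Real.sqrt_nonneg _)]; exact one_le_sqrt' (by norm_num)
      · rw [Complex.arg_ofReal_of_nonneg (Real.sqrt_nonneg _)]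
      · rw [Complex.arg_ofReal_of_nonneg (Real.sqrt_nonneg _)]; positivity
    · refine ⟨?_, ?_, ?_, ?_⟩
      · apply revmem S H hS hH 3 0 6 5 (by decide) (by decide)
        show _ = -(Complex.exp (2 * (Real.pi:ℂ) * Complex.I * ((3:ℕ):ℂ) / 8)
            - Complex.exp (2 * (Real.pi:ℂ) * Complex.I * ((0:ℕ):ℂ) / 8))
          / (Complex.exp (2 * (Real.pi:ℂ) * Complex.I * ((6:ℕ):ℂ) / 8)
            - Complex.exp (2 * (Real.pi:ℂ) * Complex.I * ((5:ℕ):ℂ) / 8))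
        rw [ratio_val 3 0 6 5 3 1 (by rw [show Real.pi * (((3:ℕ):ℝ) - ((0:ℕ):ℝ)) / 8 = Real.pi * 3 / 8 by push_cast; ring]; exact sv3) (by rw [show Real.pi * (((6:ℕ):ℝ) - ((5:ℕ):ℝ)) / 8 = Real.pi * 1 / 8 by push_cast; ring]; exact sv1)]
        norm_num [rat31]
      · rw [Complex.norm_real, Real.norm_eq_abs, _root_.abs_of_nonneg (by positivity)]; linarith [s2pos]
      · rw [Complex.arg_ofReal_of_nonneg (by positivity)]
      · rw [Complex.arg_ofReal_of_nonneg (by positivity)]; positivity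
    · refine ⟨?_, ?_, ?_, ?_⟩
      · apply revmem S H hS hH 4 0 7 4 (by decide) (by decide)
        show _ = -(Complex.exp (2 * (Real.pi:ℂ) * Complex.I * ((4:ℕ):ℂ) / 8)
            - Complex.exp (2 * (Real.pi:ℂ) * Complex.I * ((0:ℕ):ℂ) / 8))
          / (Complex.exp (2 * (Real.pi:ℂ) * Complex.I * ((7:ℕ):ℂ) / 8)
            - Complex.exp (2 * (Real.pi:ℂ) * Complex.I * ((4:ℕ):ℂ) / 8))
        rw [ratio_val 4 0 7 4 4 3 (by rw [show Real.pi * (((4:ℕ):ℝ) - ((0:ℕ):ℝ)) / 8 = Real.pi * 4 / 8 by push_cast; ring]; exact sv4) (by rw [show Real.pi * (((7:ℕ):ℝ) - ((4:ℕ):ℝ)) / 8 = Real.pi * 3 / 8 by push_cast; ring]; exact sv3)]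
        norm_num [rat43]
        left; unfold pskC; norm_cast; simp
      · show 1 ≤ ‖_ * pskC‖; rw [abs_r_pskC1, _root_.abs_of_nonneg (Real.sqrt_nonneg _)]; exact one_le_sqrt' (by nlinarith [s2sq, s2pos])
      · show 0 ≤ Complex.arg (_ * pskC); rw [arg_r_pskC1 _ (lt_of_lt_of_le zero_lt_one (one_le_sqrt' (by nlinarith [s2sq, s2pos])))]; positivity
      · show Complex.arg (_ * pskC) ≤ _; rw [arg_r_pskC1 _ (lt_of_lt_of_le zero_lt_one (one_le_sqrt' (by nlinarith [s2sq, s2pos])))]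
    · refine ⟨?_, ?_, ?_, ?_⟩
      · apply revmem S H hS hH 3 0 6 4 (by decide) (by decide)
        show _ = -(Complex.exp (2 * (Real.pi:ℂ) * Complex.I * ((3:ℕ):ℂ) / 8)
            - Complex.exp (2 * (Real.pi:ℂ) * Complex.I * ((0:ℕ):ℂ) / 8))
          / (Complex.exp (2 * (Real.pi:ℂ) * Complex.I * ((6:ℕ):ℂ) / 8)
            - Complex.exp (2 * (Real.pi:ℂ) * Complex.I * ((4:ℕ):ℂ) / 8))
        rw [ratio_val 3 0 6 4 3 2 (by rw [show Real.pi * (((3:ℕ):ℝ) - ((0:ℕ):ℝ)) / 8 = Real.pi * 3 / 8 by push_cast; ring]; exact sv3) (by rw [show Real.pi * (((6:ℕ):ℝ) - ((4:ℕ):ℝ)) / 8 = Real.pi * 2 / 8 by push_cast; ring]; exact sv2)]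
        norm_num [rat32]
        left; unfold pskC; norm_cast; simp
      · show 1 ≤ ‖_ * pskC‖; rw [abs_r_pskC1, _root_.abs_of_nonneg (Real.sqrt_nonneg _)]; exact one_le_sqrt' (by have := one_div_pos.2 s2pos; linarith)
      · show 0 ≤ Complex.arg (_ * pskC); rw [arg_r_pskC1 _ (lt_of_lt_of_le zero_lt_one (one_le_sqrt' (by have := one_div_pos.2 s2pos; linarith)))]; positivity
      · show Complex.arg (_ * pskC) ≤ _; rw [arg_r_pskC1 _ (lt_of_lt_of_le zero_lt_one (one_le_sqrt' (by have := one_div_pos.2 s2pos; linarith)))]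
    · refine ⟨?_, ?_, ?_, ?_⟩
      · apply revmem S H hS hH 2 0 5 4 (by decide) (by decide)
        show _ = -(Complex.exp (2 * (Real.pi:ℂ) * Complex.I * ((2:ℕ):ℂ) / 8)
            - Complex.exp (2 * (Real.pi:ℂ) * Complex.I * ((0:ℕ):ℂ) / 8))
          / (Complex.exp (2 * (Real.pi:ℂ) * Complex.I * ((5:ℕ):ℂ) / 8)
            - Complex.exp (2 * (Real.pi:ℂ) * Complex.I * ((4:ℕ):ℂ) / 8))
        rw [ratio_val 2 0 5 4 2 1 (by rw [show Real.pi * (((2:ℕ):ℝ) - ((0:ℕ):ℝ)) / 8 = Real.pi * 2 / 8 by push_cast; ring]; exact sv2) (by rw [show Real.pi * (((5:ℕ):ℝ) - ((4:ℕ):ℝ)) / 8 = Real.pi * 1 / 8 by push_cast; ring]; exact sv1)]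
        norm_num [rat21]
        left; unfold pskC; norm_cast; simp
      · show 1 ≤ ‖_ * pskC‖; rw [abs_r_pskC1, _root_.abs_of_nonneg (Real.sqrt_nonneg _)]; exact one_le_sqrt' (by linarith [s2pos])
      · show 0 ≤ Complex.arg (_ * pskC); rw [arg_r_pskC1 _ (lt_of_lt_of_le zero_lt_one (one_le_sqrt' (by linarith [s2pos])))]; positivity
      · show Complex.arg (_ * pskC) ≤ _; rw [arg_r_pskC1 _ (lt_of_lt_of_le zero_lt_one (one_le_sqrt' (by linarith [s2pos])))]
    · refine ⟨?_, ?_, ?_, ?_⟩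
      · apply revmem S H hS hH 4 0 6 5 (by decide) (by decide)
        show _ = -(Complex.exp (2 * (Real.pi:ℂ) * Complex.I * ((4:ℕ):ℂ) / 8)
            - Complex.exp (2 * (Real.pi:ℂ) * Complex.I * ((0:ℕ):ℂ) / 8))
          / (Complex.exp (2 * (Real.pi:ℂ) * Complex.I * ((6:ℕ):ℂ) / 8)
            - Complex.exp (2 * (Real.pi:ℂ) * Complex.I * ((5:ℕ):ℂ) / 8))
        rw [ratio_val 4 0 6 5 4 1 (by rw [show Real.pi * (((4:ℕ):ℝ) - ((0:ℕ):ℝ)) / 8 = Real.pi * 4 / 8 by push_cast; ring]; exact sv4) (by rw [show Real.pi * (((6:ℕ):ℝ) - ((5:ℕ):ℝ)) / 8 = Real.pi * 1 / 8 by push_cast; ring]; exact sv1)]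
        norm_num [rat41]
        left; unfold pskC; norm_cast; simp
      · show 1 ≤ ‖_ * pskC‖; rw [abs_r_pskC1, _root_.abs_of_nonneg (Real.sqrt_nonneg _)]; exact one_le_sqrt' (by linarith [s2pos])
      · show 0 ≤ Complex.arg (_ * pskC); rw [arg_r_pskC1 _ (lt_of_lt_of_le zero_lt_one (one_le_sqrt' (by linarith [s2pos])))]; positivity
      · show Complex.arg (_ * pskC) ≤ _; rw [arg_r_pskC1 _ (lt_of_lt_of_le zero_lt_one (one_le_sqrt' (by linarith [s2pos])))]
end

section
/- Let S₄ = {1, i, −1, −i} ⊆ ℂ be the QPSK signal set and for γ > 0, θ ∈ ℝ define d_min(γ, θ) = min{|(s₁ − s₁′) + γe^{iθ}(s₂ − s₂′)| : (s₁, s₂) ≠ (s₁′, s₂′) ∈ S₄ × S₄}. Then d_min(1, π/6) = √(4 − 2√3), and for every θ ∈ [0, π/4], d_min(1, θ) ≤ √(4 − 2√3). That is, on the arc γ = 1, θ ∈ [0, π/4], the minimum distance of the effective constellation is maximized at θ = π/6 (the optimal rotation angle of 30° for the violation circle centred at the singular fade state (1, 0)). -/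
/-- The minimum distance of the effective constellation for two QPSK users at fade state
`γe^{iθ}`. -/
noncomputable def qpskDmin (γ θ : ℝ) : ℝ :=
  sInf {d : ℝ | ∃ s₁ ∈ ({1, Complex.I, -1, -Complex.I} : Set ℂ),
      ∃ s₂ ∈ ({1, Complex.I, -1, -Complex.I} : Set ℂ),
      ∃ s₁' ∈ ({1, Complex.I, -1, -Complex.I} : Set ℂ),
      ∃ s₂' ∈ ({1, Complex.I, -1, -Complex.I} : Set ℂ),
      (s₁, s₂) ≠ (s₁', s₂') ∧
      d = ‖(s₁ - s₁') + (γ : ℂ) * Complex.exp ((θ : ℂ) * Complex.I) * (s₂ - s₂')‖}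

private lemma exp_real (θ : ℝ) :
    Complex.exp ((θ : ℂ) * Complex.I) = (Real.cos θ : ℂ) + (Real.sin θ : ℂ) * Complex.I := by
  rw [Complex.exp_mul_I, ← Complex.ofReal_cos, ← Complex.ofReal_sin]

set_option maxHeartbeats 2000000 in
private lemma key_lower (a b c e : ℂ)
    (h₁ : a ∈ ({1, Complex.I, -1, -Complex.I} : Set ℂ))
    (h₂ : b ∈ ({1, Complex.I, -1, -Complex.I} : Set ℂ))
    (h₃ : c ∈ ({1, Complex.I, -1, -Complex.I} : Set ℂ))
    (h₄ : e ∈ ({1, Complex.I, -1, -Complex.I} : Set ℂ))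
    (hne : (a, b) ≠ (c, e)) :
    4 - 2 * Real.sqrt 3 ≤ Complex.normSq
      ((a - c) + ((Real.cos (Real.pi / 6) : ℂ) + (Real.sin (Real.pi / 6) : ℂ) * Complex.I) * (b - e)) := by
  rw [Real.cos_pi_div_six, Real.sin_pi_div_six]
  have h3 : Real.sqrt 3 * Real.sqrt 3 = 3 := Real.mul_self_sqrt (by norm_num)
  have hl : (1.7 : ℝ) ≤ Real.sqrt 3 := by nlinarith [Real.sqrt_nonneg 3]
  have hu : Real.sqrt 3 ≤ 1.8 := by nlinarith [Real.sqrt_nonneg 3]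
  simp only [Set.mem_insert_iff, Set.mem_singleton_iff] at h₁ h₂ h₃ h₄
  rcases h₁ with rfl | rfl | rfl | rfl <;> rcases h₃ with rfl | rfl | rfl | rfl <;>
    rcases h₂ with rfl | rfl | rfl | rfl <;> rcases h₄ with rfl | rfl | rfl | rfl <;>
    first
      | exact absurd rfl hne
      | (simp only [Complex.normSq_apply, Complex.add_re, Complex.add_im, Complex.sub_re,
          Complex.sub_im, Complex.mul_re, Complex.mul_im, Complex.I_re, Complex.I_im,
          Complex.one_re, Complex.one_im, Complex.neg_re, Complex.neg_im,
          Complex.ofReal_re, Complex.ofReal_im]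
         ring_nf
         linarith [h3, hl, hu])

/-- **Example 6 (part).** On the arc `γ = 1`, `θ ∈ [0, π/4]`, the minimum distance of the
effective QPSK constellation is maximized at `θ = π/6` (the optimal rotation angle of 30°
for the violation circle centred at the singular fade state `(1, 0)`), where it equals
`√(4 − 2√3)`. -/
theorem qpsk_optimal_rotation_at_gamma_one :
    qpskDmin 1 (Real.pi / 6) = Real.sqrt (4 - 2 * Real.sqrt 3) ∧
    ∀ θ ∈ Set.Icc (0 : ℝ) (Real.pi / 4),
      qpskDmin 1 θ ≤ Real.sqrt (4 - 2 * Real.sqrt 3) := by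
  have h3 : Real.sqrt 3 * Real.sqrt 3 = 3 := Real.mul_self_sqrt (by norm_num)
  have hbdd : ∀ θ : ℝ, BddBelow {d : ℝ | ∃ s₁ ∈ ({1, Complex.I, -1, -Complex.I} : Set ℂ),
      ∃ s₂ ∈ ({1, Complex.I, -1, -Complex.I} : Set ℂ),
      ∃ s₁' ∈ ({1, Complex.I, -1, -Complex.I} : Set ℂ),
      ∃ s₂' ∈ ({1, Complex.I, -1, -Complex.I} : Set ℂ),
      (s₁, s₂) ≠ (s₁', s₂') ∧
      d = ‖(s₁ - s₁') + ((1:ℝ) : ℂ) * Complex.exp ((θ : ℂ) * Complex.I) * (s₂ - s₂')‖} := by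
    intro θ
    refine ⟨0, ?_⟩
    rintro d ⟨a, _, b, _, c, _, e, _, _, rfl⟩
    positivity
  have hne1 : ((1 : ℂ), (-1 : ℂ)) ≠ ((-Complex.I : ℂ), (Complex.I : ℂ)) := by
    simp [Prod.ext_iff, Complex.ext_iff]
  have hne2 : ((1 : ℂ), (Complex.I : ℂ)) ≠ ((Complex.I : ℂ), (-Complex.I : ℂ)) := by
    simp [Prod.ext_iff, Complex.ext_iff]
  constructor
  · unfold qpskDmin
    apply le_antisymm
    · refine csInf_le (hbdd _) ⟨1, by simp, -1, by simp, -Complex.I, by simp, Complex.I,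
        by simp, hne1, ?_⟩
      rw [exp_real, Real.cos_pi_div_six, Real.sin_pi_div_six, Complex.norm_def]
      congr 1
      simp only [Complex.normSq_apply, Complex.add_re, Complex.add_im, Complex.sub_re,
        Complex.sub_im, Complex.mul_re, Complex.mul_im, Complex.I_re, Complex.I_im,
        Complex.one_re, Complex.one_im, Complex.neg_re, Complex.neg_im,
        Complex.ofReal_re, Complex.ofReal_im, Complex.ofReal_one]
      nlinarith [h3]
    · refine le_csInf ⟨_, 1, by simp, -1, by simp, -Complex.I, by simp, Complex.I,
        by simp, hne1, rfl⟩ ?_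
      rintro d ⟨a, ha, b, hb, c, hc, e, he, hne, rfl⟩
      rw [exp_real, Complex.norm_def]
      apply Real.sqrt_le_sqrt
      have := key_lower a b c e ha hb hc he hne
      rw [Complex.ofReal_one, one_mul]
      exact this
  · rintro θ ⟨hθ0, hθ1⟩
    unfold qpskDmin
    rcases le_total θ (Real.pi / 6) with hc | hc
    · have hcos : Real.sqrt 3 / 2 ≤ Real.cos θ := by
        rw [← Real.cos_pi_div_six]
        exact Real.cos_le_cos_of_nonneg_of_le_pi hθ0 (by linarith [Real.pi_pos]) hc
      refine le_trans (csInf_le (hbdd _) ⟨1, by simp, -1, by simp, -Complex.I, by simp,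
        Complex.I, by simp, hne1, rfl⟩) ?_
      rw [exp_real, Complex.norm_def]
      apply Real.sqrt_le_sqrt
      have hpyth := Real.sin_sq_add_cos_sq θ
      simp only [Complex.normSq_apply, Complex.add_re, Complex.add_im, Complex.sub_re,
        Complex.sub_im, Complex.mul_re, Complex.mul_im, Complex.I_re, Complex.I_im,
        Complex.one_re, Complex.one_im, Complex.neg_re, Complex.neg_im,
        Complex.ofReal_re, Complex.ofReal_im, Complex.ofReal_one]
      nlinarith [hcos, hpyth, h3]
    · have h2 : Real.sqrt 2 * Real.sqrt 2 = 2 := Real.mul_self_sqrt (by norm_num)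
      have h2l : (1.4 : ℝ) ≤ Real.sqrt 2 := by nlinarith [Real.sqrt_nonneg 2]
      have hmono : Real.sin (Real.pi / 6 + Real.pi / 4) ≤ Real.sin (θ + Real.pi / 4) := by
        apply Real.strictMonoOn_sin.monotoneOn ?_ ?_ (by linarith)
        · constructor
          · linarith [Real.pi_pos]
          · linarith
        · constructor
          · linarith [Real.pi_pos]
          · linarith
      rw [Real.sin_add, Real.sin_add, Real.sin_pi_div_six, Real.cos_pi_div_six,
        Real.sin_pi_div_four, Real.cos_pi_div_four] at hmono
      refine le_trans (csInf_le (hbdd _) ⟨1, by simp, Complex.I, by simp, Complex.I, by simp,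
        -Complex.I, by simp, hne2, rfl⟩) ?_
      rw [exp_real, Complex.norm_def]
      apply Real.sqrt_le_sqrt
      have hpyth := Real.sin_sq_add_cos_sq θ
      simp only [Complex.normSq_apply, Complex.add_re, Complex.add_im, Complex.sub_re,
        Complex.sub_im, Complex.mul_re, Complex.mul_im, Complex.I_re, Complex.I_im,
        Complex.one_re, Complex.one_im, Complex.neg_re, Complex.neg_im,
        Complex.ofReal_re, Complex.ofReal_im, Complex.ofReal_one]
      nlinarith [hmono, h2l, hpyth, h3]
end

section
/- Let S₄ = {1, i, −1, −i} ⊆ ℂ be the QPSK signal set and for γ > 0, θ ∈ ℝ define d_min(γ, θ) = min{|(s₁ − s₁′) + γe^{iθ}(s₂ − s₂′)| : (s₁, s₂) ≠ (s₁′, s₂′) ∈ S₄ × S₄}. Let θ* = arcsin(1/(2√2)). Then d_min(√2, θ*) = √(6 − 2√7), and for every θ ∈ [0, π/4], d_min(√2, θ) ≤ √(6 − 2√7). That is, on the arc γ = √2, θ ∈ [0, π/4], the minimum distance of the effective constellation is maximized at θ = arcsin(1/(2√2)) ≈ 20.7° (so the optimal rotation for the violation circle centred at the singular fade state (√2, π/4)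 is by π/4 − arcsin(1/(2√2)) ≈ 24.3° clockwise). -/
private lemma s7_sq : Real.sqrt 7 * Real.sqrt 7 = 7 := Real.mul_self_sqrt (by norm_num)
private lemma s7_lb : (2.64:ℝ) ≤ Real.sqrt 7 := by
  nlinarith [s7_sq, Real.sqrt_nonneg 7]
private lemma s7_ub : Real.sqrt 7 ≤ 2.66 := by
  nlinarith [s7_sq, Real.sqrt_nonneg 7]
private lemma s2_sq : Real.sqrt 2 * Real.sqrt 2 = 2 := Real.mul_self_sqrt (by norm_num)
private lemma s2_pos : (0:ℝ) < Real.sqrt 2 := Real.sqrt_pos.mpr (by norm_num)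

private lemma diff_mem {s s' : ℂ} (h : s ∈ ({1, Complex.I, -1, -Complex.I} : Set ℂ))
    (h' : s' ∈ ({1, Complex.I, -1, -Complex.I} : Set ℂ)) :
    s - s' ∈ ({0, 2, -2, 2*Complex.I, -(2*Complex.I), 1-Complex.I, -(1-Complex.I),
      1+Complex.I, -(1+Complex.I)} : Set ℂ) := by
  simp only [Set.mem_insert_iff, Set.mem_singleton_iff] at *
  rcases h with rfl|rfl|rfl|rfl <;> rcases h' with rfl|rfl|rfl|rfl <;>
    norm_num [Complex.ext_iff]

set_option maxHeartbeats 2000000 in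
private lemma key_lb (d1 d2 : ℂ)
    (h1 : d1 ∈ ({0, 2, -2, 2*Complex.I, -(2*Complex.I), 1-Complex.I, -(1-Complex.I),
      1+Complex.I, -(1+Complex.I)} : Set ℂ))
    (h2 : d2 ∈ ({0, 2, -2, 2*Complex.I, -(2*Complex.I), 1-Complex.I, -(1-Complex.I),
      1+Complex.I, -(1+Complex.I)} : Set ℂ))
    (hne : ¬(d1 = 0 ∧ d2 = 0)) :
    6 - 2*Real.sqrt 7 ≤
      Complex.normSq (d1 + (((Real.sqrt 7/2 : ℝ):ℂ) + (((1:ℝ)/2):ℂ)*Complex.I) * d2) := by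
  simp only [Set.mem_insert_iff, Set.mem_singleton_iff] at h1 h2
  rcases h1 with rfl|rfl|rfl|rfl|rfl|rfl|rfl|rfl|rfl <;>
    rcases h2 with rfl|rfl|rfl|rfl|rfl|rfl|rfl|rfl|rfl <;>
    first
    | exact (hne ⟨rfl, rfl⟩).elim
    | (norm_num [Complex.normSq_apply, Complex.add_re, Complex.add_im, Complex.mul_re,
        Complex.mul_im, Complex.I_re, Complex.I_im, Complex.ofReal_re, Complex.ofReal_im,
        Complex.sub_re, Complex.sub_im, Complex.neg_re, Complex.neg_im,
        Complex.one_re, Complex.one_im];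
       nlinarith [s7_sq, s7_lb, s7_ub])

private lemma hgamma (θ : ℝ) : ((Real.sqrt 2 : ℝ):ℂ) * Complex.exp ((θ:ℂ) * Complex.I)
    = ((Real.sqrt 2 * Real.cos θ : ℝ):ℂ) + ((Real.sqrt 2 * Real.sin θ : ℝ):ℂ) * Complex.I := by
  rw [Complex.exp_mul_I]
  push_cast
  ring

private noncomputable def θstar : ℝ := Real.arcsin (1 / (2 * Real.sqrt 2))

private lemma s2_ge_one : (1:ℝ) ≤ Real.sqrt 2 := by
  nlinarith [s2_sq, Real.sqrt_nonneg 2]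

private lemma hsin : Real.sin θstar = 1 / (2 * Real.sqrt 2) := by
  apply Real.sin_arcsin
  · have h : (0:ℝ) ≤ 1/(2*Real.sqrt 2) := by positivity
    linarith
  · rw [div_le_one (by positivity)]
    nlinarith [s2_ge_one]

private lemma hcos : Real.cos θstar = Real.sqrt 7 / (2 * Real.sqrt 2) := by
  rw [θstar, Real.cos_arcsin]
  have h8 : (1:ℝ) - (1 / (2 * Real.sqrt 2))^2 = 7/8 := by
    rw [div_pow, one_pow, mul_pow, Real.sq_sqrt (by norm_num : (0:ℝ) ≤ 2)]
    norm_num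
  rw [h8, show ((7:ℝ)/8) = 7 / 8 from rfl, Real.sqrt_div (by norm_num : (0:ℝ) ≤ 7)]
  congr 1
  rw [show (8:ℝ) = 2^2 * 2 by norm_num, Real.sqrt_mul (by positivity), Real.sqrt_sq (by norm_num)]

private lemma hA : Real.sqrt 2 * Real.cos θstar = Real.sqrt 7 / 2 := by
  rw [hcos]; field_simp

private lemma hB : Real.sqrt 2 * Real.sin θstar = 1 / 2 := by
  rw [hsin]; field_simp

private lemma hcval : ((Real.sqrt 2 : ℝ):ℂ) * Complex.exp ((θstar:ℂ) * Complex.I)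
    = ((Real.sqrt 7/2 : ℝ):ℂ) + (((1:ℝ)/2):ℂ) * Complex.I := by
  rw [hgamma θstar, hA, hB]
  push_cast
  ring

private lemma θstar_nonneg : 0 ≤ θstar :=
  Real.arcsin_nonneg.mpr (by positivity)

private lemma zero_lb (γ θ : ℝ) : (0:ℝ) ∈ lowerBounds
    {d : ℝ | ∃ s₁ ∈ ({1, Complex.I, -1, -Complex.I} : Set ℂ),
      ∃ s₂ ∈ ({1, Complex.I, -1, -Complex.I} : Set ℂ),
      ∃ s₁' ∈ ({1, Complex.I, -1, -Complex.I} : Set ℂ),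
      ∃ s₂' ∈ ({1, Complex.I, -1, -Complex.I} : Set ℂ),
      (s₁, s₂) ≠ (s₁', s₂') ∧
      d = ‖(s₁ - s₁') + (γ : ℂ) * Complex.exp ((θ : ℂ) * Complex.I) * (s₂ - s₂')‖} := by
  rintro d ⟨s₁, _, s₂, _, s₁', _, s₂', _, _, rfl⟩
  exact norm_nonneg _

private lemma sin_mono {θ : ℝ} (hθ : θstar ≤ θ) (hpi : θ ≤ Real.pi / 4) :
    Real.sin (θstar + Real.pi/4) ≤ Real.sin (θ + Real.pi/4) := by
  have hpi0 := Real.pi_pos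
  apply Real.strictMonoOn_sin.monotoneOn
  · constructor <;> [nlinarith [θstar_nonneg]; nlinarith [hθ]]
  · constructor <;> [nlinarith [θstar_nonneg]; nlinarith]
  · linarith

private lemma sin_shift (x : ℝ) :
    Real.sqrt 2 * Real.sin (x + Real.pi/4) = Real.sin x + Real.cos x := by
  rw [Real.sin_add, Real.cos_pi_div_four, Real.sin_pi_div_four]
  linear_combination ((Real.sin x + Real.cos x)/2) * s2_sq

private lemma pyth (θ : ℝ) :
    Real.sqrt 2 * Real.cos θ * (Real.sqrt 2 * Real.cos θ)
      + Real.sqrt 2 * Real.sin θ * (Real.sqrt 2 * Real.sin θ) = 2 := by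
  have h := Real.sin_sq_add_cos_sq θ
  linear_combination (Real.cos θ^2 + Real.sin θ^2) * s2_sq + 2 * h

/-- **Example 6 (part).** On the arc `γ = √2`, `θ ∈ [0, π/4]`, the minimum distance of the
effective QPSK constellation is maximized at `θ* = arcsin(1/(2√2)) ≈ 20.7°`, where it
equals `√(6 − 2√7)`; hence the optimal rotation for the violation circle centred at
`(√2, π/4)` is by `π/4 − θ*` clockwise. -/
theorem qpsk_optimal_rotation_at_gamma_sqrt_two :
    qpskDmin (Real.sqrt 2) (Real.arcsin (1 / (2 * Real.sqrt 2))) =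
      Real.sqrt (6 - 2 * Real.sqrt 7) ∧
    ∀ θ ∈ Set.Icc (0 : ℝ) (Real.pi / 4),
      qpskDmin (Real.sqrt 2) θ ≤ Real.sqrt (6 - 2 * Real.sqrt 7) := by
  have memS : ∀ z ∈ ({1, Complex.I, -1, -Complex.I} : Set ℂ), True := fun _ _ => trivial
  constructor
  · -- value at θ*
    show sInf _ = _
    have hmem : Real.sqrt (6 - 2 * Real.sqrt 7) ∈
        {d : ℝ | ∃ s₁ ∈ ({1, Complex.I, -1, -Complex.I} : Set ℂ),
          ∃ s₂ ∈ ({1, Complex.I, -1, -Complex.I} : Set ℂ),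
          ∃ s₁' ∈ ({1, Complex.I, -1, -Complex.I} : Set ℂ),
          ∃ s₂' ∈ ({1, Complex.I, -1, -Complex.I} : Set ℂ),
          (s₁, s₂) ≠ (s₁', s₂') ∧
          d = ‖(s₁ - s₁') + ((Real.sqrt 2 : ℝ) : ℂ) *
            Complex.exp ((θstar : ℂ) * Complex.I) * (s₂ - s₂')‖} := by
      refine ⟨1, by simp, -1, by simp, -Complex.I, by simp, Complex.I, by simp, ?_, ?_⟩
      · simp [Prod.ext_iff, Complex.ext_iff]
      · rw [hcval, Complex.norm_def]
        congr 1
        norm_num [Complex.normSq_apply, Complex.add_re, Complex.add_im, Complex.mul_re,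
          Complex.mul_im, Complex.I_re, Complex.I_im, Complex.ofReal_re, Complex.ofReal_im,
          Complex.sub_re, Complex.sub_im, Complex.neg_re, Complex.neg_im,
          Complex.one_re, Complex.one_im]
        linear_combination (-1/2:ℝ) * s7_sq
    apply le_antisymm
    · exact csInf_le ⟨0, zero_lb _ _⟩ hmem
    · apply le_csInf ⟨_, hmem⟩
      rintro b ⟨s₁, hs₁, s₂, hs₂, s₁', hs₁', s₂', hs₂', hne, rfl⟩
      rw [hcval, Complex.norm_def]
      apply Real.sqrt_le_sqrt
      apply key_lb _ _ (diff_mem hs₁ hs₁') (diff_mem hs₂ hs₂')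
      rintro ⟨e1, e2⟩
      exact hne (Prod.ext (sub_eq_zero.mp e1) (sub_eq_zero.mp e2))
  · rintro θ ⟨h0, hpi4⟩
    show sInf _ ≤ _
    rcases le_total θ θstar with hle | hge
    · -- use the pair Δ₁ = 1+i, Δ₂ = -1-i
      have hel : ‖(1 - (-Complex.I)) + ((Real.sqrt 2 : ℝ) : ℂ) *
          Complex.exp ((θ : ℂ) * Complex.I) * ((-1) - Complex.I)‖ ∈
          {d : ℝ | ∃ s₁ ∈ ({1, Complex.I, -1, -Complex.I} : Set ℂ),
            ∃ s₂ ∈ ({1, Complex.I, -1, -Complex.I} : Set ℂ),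
            ∃ s₁' ∈ ({1, Complex.I, -1, -Complex.I} : Set ℂ),
            ∃ s₂' ∈ ({1, Complex.I, -1, -Complex.I} : Set ℂ),
            (s₁, s₂) ≠ (s₁', s₂') ∧
            d = ‖(s₁ - s₁') + ((Real.sqrt 2 : ℝ) : ℂ) *
              Complex.exp ((θ : ℂ) * Complex.I) * (s₂ - s₂')‖} :=
        ⟨1, by simp, -1, by simp, -Complex.I, by simp, Complex.I, by simp,
          by simp [Prod.ext_iff, Complex.ext_iff], rfl⟩
      refine le_trans (csInf_le ⟨0, zero_lb _ _⟩ hel) ?_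
      rw [hgamma θ, Complex.norm_def]
      rw [show Real.sqrt (6 - 2*Real.sqrt 7)
          = Real.sqrt (6 - 2*Real.sqrt 7) from rfl]
      apply Real.sqrt_le_sqrt
      have hcmono : Real.cos θstar ≤ Real.cos θ := by
        apply Real.cos_le_cos_of_nonneg_of_le_pi h0
        · have := Real.arcsin_le_pi_div_two (1 / (2 * Real.sqrt 2))
          have := Real.pi_pos
          rw [θstar]; linarith
        · exact hle
      have hp : 0 ≤ Real.sqrt 2 * (Real.cos θ - Real.cos θstar) :=
        mul_nonneg (Real.sqrt_nonneg 2) (by linarith)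
      norm_num [Complex.normSq_apply, Complex.add_re, Complex.add_im, Complex.mul_re,
        Complex.mul_im, Complex.I_re, Complex.I_im, Complex.ofReal_re, Complex.ofReal_im,
        Complex.sub_re, Complex.sub_im, Complex.neg_re, Complex.neg_im,
        Complex.one_re, Complex.one_im, Complex.cos_ofReal_re, Complex.sin_ofReal_re]
      nlinarith [pyth θ, hp, hA]
    · -- use the pair Δ₁ = 2, Δ₂ = -1+i
      have hel : ‖(1 - (-1)) + ((Real.sqrt 2 : ℝ) : ℂ) *
          Complex.exp ((θ : ℂ) * Complex.I) * (Complex.I - 1)‖ ∈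
          {d : ℝ | ∃ s₁ ∈ ({1, Complex.I, -1, -Complex.I} : Set ℂ),
            ∃ s₂ ∈ ({1, Complex.I, -1, -Complex.I} : Set ℂ),
            ∃ s₁' ∈ ({1, Complex.I, -1, -Complex.I} : Set ℂ),
            ∃ s₂' ∈ ({1, Complex.I, -1, -Complex.I} : Set ℂ),
            (s₁, s₂) ≠ (s₁', s₂') ∧
            d = ‖(s₁ - s₁') + ((Real.sqrt 2 : ℝ) : ℂ) *
              Complex.exp ((θ : ℂ) * Complex.I) * (s₂ - s₂')‖} :=
        ⟨1, by simp, Complex.I, by simp, -1, by simp, 1, by simp,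
          by simp [Prod.ext_iff, Complex.ext_iff], rfl⟩
      refine le_trans (csInf_le ⟨0, zero_lb _ _⟩ hel) ?_
      rw [hgamma θ, Complex.norm_def]
      apply Real.sqrt_le_sqrt
      -- monotonicity of sin gives cos θ + sin θ ≥ cos θ* + sin θ*
      have hm := sin_mono hge hpi4
      have e3 : Real.sqrt 2 * (Real.sin θ + Real.cos θ)
          = Real.sqrt 2 * (Real.sqrt 2 * Real.sin (θ + Real.pi/4)) := by
        rw [sin_shift θ]
      have e4 : Real.sqrt 2 * (Real.sin θstar + Real.cos θstar)
          = Real.sqrt 2 * (Real.sqrt 2 * Real.sin (θstar + Real.pi/4)) := by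
        rw [sin_shift θstar]
      have e1 : Real.sqrt 2 * (Real.sqrt 2 * Real.sin (θ + Real.pi/4))
          = 2 * Real.sin (θ + Real.pi/4) := by
        linear_combination Real.sin (θ + Real.pi/4) * s2_sq
      have e2 : Real.sqrt 2 * (Real.sqrt 2 * Real.sin (θstar + Real.pi/4))
          = 2 * Real.sin (θstar + Real.pi/4) := by
        linear_combination Real.sin (θstar + Real.pi/4) * s2_sq
      have hfin : Real.sqrt 2 * Real.sin θ + Real.sqrt 2 * Real.cos θ
          ≥ 1/2 + Real.sqrt 7/2 := by
        have hAB : Real.sqrt 2 * Real.sin θstar + Real.sqrt 2 * Real.cos θstar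
            = 1/2 + Real.sqrt 7/2 := by rw [hA, hB]
        nlinarith [e3, e4, e1, e2, hm, hAB]
      norm_num [Complex.normSq_apply, Complex.add_re, Complex.add_im, Complex.mul_re,
        Complex.mul_im, Complex.I_re, Complex.I_im, Complex.ofReal_re, Complex.ofReal_im,
        Complex.sub_re, Complex.sub_im, Complex.neg_re, Complex.neg_im,
        Complex.one_re, Complex.one_im, Complex.cos_ofReal_re, Complex.sin_ofReal_re]
      nlinarith [pyth θ, hfin]
end
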